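/- Let (X,r) be a nondegenerate involutive solution. Then the retraction ([X], r_{[X]}), defined on classes [x] (where x∼y iff λ_x=λ_y) by r_{[X]}([x],[y]) = ([λ_x(y)], [ρ_y(x)]), is again a nondegenerate involutive solution. Moreover if (X,r) is square-free then so is ([X], r_{[X]}), and if (X,r) satisfies lri then so does ([X], r_{[X]}). -/

import Mathlib

/-- The quadratic map `r(x,y) = (λ_x(y), ρ_y(x))`. -/
def ybMap {X : Type*} (lam rho : X → X → X) : X × X → X × X :=
  fun p => (lam p.1 p.2, rho p.2 p.1)

/-- `r¹² = r × id` on `X × X × X`. -/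
def ybR12 {X : Type*} (lam rho : X → X → X) : X × X × X → X × X × X :=
  fun p => (lam p.1 p.2.1, rho p.2.1 p.1, p.2.2)

/-- `r²³ = id × r` on `X × X × X`. -/
def ybR23 {X : Type*} (lam rho : X → X → X) : X × X × X → X × X × X :=
  fun p => (p.1, lam p.2.1 p.2.2, rho p.2.2 p.2.1)

/-- The braid (Yang–Baxter) relation `r¹²r²³r¹² = r²³r¹²r²³`. -/
def YbBraided {X : Type*} (lam rho : X → X → X) : Prop :=
  ybR12 lam rho ∘ ybR23 lam rho ∘ ybR12 lam rho
    = ybR23 lam rho ∘ ybR12 lam rho ∘ ybR23 lam rho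

/-- `r` is involutive: `r ∘ r = id`. -/
def YbInvolutive {X : Type*} (lam rho : X → X → X) : Prop :=
  ∀ p, ybMap lam rho (ybMap lam rho p) = p

/-- Nondegeneracy: all `λ_x` and `ρ_x` are bijective. -/
def YbNondeg {X : Type*} (lam rho : X → X → X) : Prop :=
  (∀ x, Function.Bijective (lam x)) ∧ (∀ x, Function.Bijective (rho x))

/-- Condition lri: `ρ_x(λ_x(y)) = y = λ_x(ρ_x(y))`. -/
def YbLri {X : Type*} (lam rho : X → X → X) : Prop :=
  ∀ x y, rho x (lam x y) = y ∧ lam x (rho x y) = y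

/-- Square-free: `r(x,x) = (x,x)`. -/
def YbSquareFree {X : Type*} (lam rho : X → X → X) : Prop :=
  ∀ x, lam x x = x ∧ rho x x = x

/-- The retraction equivalence: `x ∼ y` iff `λ_x = λ_y`. -/
def lamSetoid {X : Type*} (lam : X → X → X) : Setoid X where
  r x y := lam x = lam y
  iseqv := ⟨fun _ => rfl, Eq.symm, Eq.trans⟩

theorem yb_lemA {X : Type*} (l r : X → X → X)
    (hinjl : ∀ x, Function.Injective (l x))
    (hE1 : ∀ x y z, l (l x y) (l (r y x) z) = l x (l y z))
    (hI1 : ∀ x y, l (l x y) (r y x) = x)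
    {y y' z p p' : X} (h : ∀ w, l y w = l y' w)
    (hp : l z p = y) (hp' : l z p' = y') :
    ∀ w, l p w = l p' w := by
  have hc : l y (r p z) = z := by have := hI1 z p; rwa [hp] at this
  have hc' : l y (r p' z) = z := by
    have := hI1 z p'; rw [hp'] at this; rw [h]; exact this
  have hcc : r p z = r p' z := hinjl y (by rw [hc, hc'])
  intro w
  have e1 : l y (l (r p z) w) = l z (l p w) := by
    have := hE1 z p w; rwa [hp] at this
  have e2 : l y (l (r p z) w) = l z (l p' w) := by
    have := hE1 z p' w; rw [hp'] at this; rw [h, hcc]; exact this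
  exact hinjl z (e1.symm.trans e2)

theorem yb_bridge {X : Type*} (l r : X → X → X)
    (hinjl : ∀ x, Function.Injective (l x))
    (hinjr : ∀ x, Function.Injective (r x))
    (hsurjl : ∀ x, Function.Surjective (l x))
    (hsurjr : ∀ x, Function.Surjective (r x))
    (hE1 : ∀ x y z, l (l x y) (l (r y x) z) = l x (l y z))
    (hI1 : ∀ x y, l (l x y) (r y x) = x)
    (hI2 : ∀ x y, r (r y x) (l x y) = y)
    {a b : X} (h : ∀ w, l a w = l b w) :
    ∀ m, r a m = r b m := by
  intro m
  set y := r a m with hy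
  obtain ⟨t, ht⟩ := hsurjl y y
  obtain ⟨p, hpp⟩ := hsurjr y a
  obtain ⟨q, hq⟩ := hsurjr y b
  have h1 : r a (l p y) = y := by have := hI2 p y; rwa [hpp] at this
  have hm : m = l p y := hinjr a (by rw [h1, hy])
  have hms : l m (l a t) = m := by
    have := hE1 p y t
    rw [hpp, ht, ← hm] at this
    exact this
  have hms' : l (l q y) (l b t) = l q y := by
    have := hE1 q y t
    rw [hq, ht] at this
    exact this
  rw [h t] at hms
  have r1 : r (l b t) m = l b t := by
    have := hI1 m (l b t)
    rw [hms] at this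
    exact hinjl m (this.trans hms.symm)
  have r2 : r (l b t) (l q y) = l b t := by
    have := hI1 (l q y) (l b t)
    rw [hms'] at this
    exact hinjl (l q y) (this.trans hms'.symm)
  have meq : m = l q y := hinjr (l b t) (r1.trans r2.symm)
  have hb2 : r b (l q y) = y := by have := hI2 q y; rwa [hq] at this
  have hbm : r b m = y := by rw [meq]; exact hb2
  rw [hbm, hy]

/-- the retraction of a nondegenerate involutive solution is again a
nondegenerate involutive solution; it is square-free if `(X,r)` is, and satisfies lri
if `(X,r)` does. -/
theorem retraction_is_solution {X : Type*} (lam rho : X → X → X)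
    (hnd : YbNondeg lam rho) (hinv : YbInvolutive lam rho) (hbr : YbBraided lam rho) :
    ∃ lamQ rhoQ : Quotient (lamSetoid lam) → Quotient (lamSetoid lam) → Quotient (lamSetoid lam),
      (∀ x y : X, lamQ (Quotient.mk (lamSetoid lam) x) (Quotient.mk (lamSetoid lam) y)
          = Quotient.mk (lamSetoid lam) (lam x y)) ∧
      (∀ x y : X, rhoQ (Quotient.mk (lamSetoid lam) y) (Quotient.mk (lamSetoid lam) x)
          = Quotient.mk (lamSetoid lam) (rho y x)) ∧
      YbBraided lamQ rhoQ ∧ YbInvolutive lamQ rhoQ ∧ YbNondeg lamQ rhoQ ∧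
      (YbSquareFree lam rho → YbSquareFree lamQ rhoQ) ∧
      (YbLri lam rho → YbLri lamQ rhoQ) := by
  obtain ⟨hndl, hndr⟩ := hnd
  have injL : ∀ x, Function.Injective (lam x) := fun x => (hndl x).1
  have surjL : ∀ x, Function.Surjective (lam x) := fun x => (hndl x).2
  have injR : ∀ x, Function.Injective (rho x) := fun x => (hndr x).1
  have surjR : ∀ x, Function.Surjective (rho x) := fun x => (hndr x).2
  have E1 : ∀ x y z, lam (lam x y) (lam (rho y x) z) = lam x (lam y z) :=
    fun x y z => congrArg Prod.fst (congrFun hbr (x, y, z))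
  have E2 : ∀ x y z, rho (lam (rho y x) z) (lam x y) = lam (rho (lam y z) x) (rho z y) :=
    fun x y z => congrArg (fun p => p.2.1) (congrFun hbr (x, y, z))
  have E3 : ∀ x y z, rho z (rho y x) = rho (rho z y) (rho (lam y z) x) :=
    fun x y z => congrArg (fun p => p.2.2) (congrFun hbr (x, y, z))
  have I1 : ∀ x y, lam (lam x y) (rho y x) = x :=
    fun x y => congrArg Prod.fst (hinv (x, y))
  have I2 : ∀ x y, rho (rho y x) (lam x y) = y :=
    fun x y => congrArg Prod.snd (hinv (x, y))
  have hE1' : ∀ x y z, rho (rho x y) (rho (lam y x) z) = rho x (rho y z) :=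
    fun x y z => (E3 z y x).symm
  have hI1' : ∀ x y, rho (rho x y) (lam y x) = x := fun x y => I2 y x
  have hI2' : ∀ x y, lam (lam y x) (rho x y) = y := fun x y => I1 y x
  have bridgeL : ∀ {a b : X}, (∀ w, lam a w = lam b w) → ∀ m, rho a m = rho b m :=
    fun h => yb_bridge lam rho injL injR surjL surjR E1 I1 I2 h
  have bridgeR : ∀ {a b : X}, (∀ w, rho a w = rho b w) → ∀ m, lam a m = lam b m :=
    fun h => yb_bridge rho lam injR injL surjR surjL hE1' hI1' hI2' h
  have K : ∀ x a b, lam a = lam b → lam (lam x a) = lam (lam x b) := by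
    intro x a b hab
    have hab' : ∀ w, lam a w = lam b w := congrFun hab
    have hr := bridgeL hab'
    have h1 : rho (rho a x) (lam x a) = a := I2 x a
    have h2 : rho (rho a x) (lam x b) = b := by rw [hr x]; exact I2 x b
    have h3 : ∀ w, rho (lam x a) w = rho (lam x b) w :=
      yb_lemA rho lam injR hE1' hI1' hr h1 h2
    exact funext (bridgeR h3)
  have P2 : ∀ y x x', lam x = lam x' → lam (rho y x) = lam (rho y x') := by
    intro y x x' h
    have h' : ∀ w, lam x w = lam x' w := congrFun h
    have hp : lam (lam x y) (rho y x) = x := I1 x y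
    have hp' : lam (lam x y) (rho y x') = x' := by rw [h]; exact I1 x' y
    exact funext (yb_lemA lam rho injL E1 I1 h' hp hp')
  have hwdl : ∀ a a', lam a = lam a' → ∀ b b', lam b = lam b' →
      lam (lam a b) = lam (lam a' b') := by
    intro a a' ha b b' hb
    have h1 := K a b b' hb
    have h2 : lam a b' = lam a' b' := congrFun ha b'
    rw [h1, h2]
  have hwdr : ∀ a a', lam a = lam a' → ∀ b b', lam b = lam b' →
      lam (rho a b) = lam (rho a' b') := by
    intro a a' ha b b' hb
    have h1 : rho a b' = rho a' b' := bridgeL (congrFun ha) b'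
    rw [← h1]; exact P2 a b b' hb
  refine ⟨Quotient.map₂ lam (fun {a₁ a₂} ha {b₁ b₂} hb => hwdl a₁ a₂ ha b₁ b₂ hb),
      Quotient.map₂ rho (fun {a₁ a₂} ha {b₁ b₂} hb => hwdr a₁ a₂ ha b₁ b₂ hb),
      fun x y => rfl, fun x y => rfl, ?_, ?_, ?_, ?_, ?_⟩
  case _ =>
    -- braid
    funext p
    obtain ⟨qx, qy, qz⟩ := p
    induction qx using Quotient.ind with
    | _ x =>
    induction qy using Quotient.ind with
    | _ y =>
    induction qz using Quotient.ind with
    | _ z =>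
    show (_, _, _) = (_, _, _)
    simp only [ybR12, ybR23, Function.comp_apply, Quotient.map₂_mk, Prod.mk.injEq]
    exact ⟨congrArg _ (E1 x y z), congrArg _ (E2 x y z), congrArg _ (E3 x y z)⟩
  case _ =>
    intro p
    obtain ⟨qx, qy⟩ := p
    induction qx using Quotient.ind with
    | _ x =>
    induction qy using Quotient.ind with
    | _ y =>
    show (_, _) = (_, _)
    simp only [ybMap, Quotient.map₂_mk, Prod.mk.injEq]
    exact ⟨congrArg _ (I1 x y), congrArg _ (I2 x y)⟩
  case _ =>
    constructor
    · intro qx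
      induction qx using Quotient.ind with
      | _ x =>
      constructor
      · intro qa qb
        induction qa using Quotient.ind with
        | _ a =>
        induction qb using Quotient.ind with
        | _ b =>
        intro h
        have hq : lam (lam x a) = lam (lam x b) := Quotient.exact h
        have h3 : ∀ w, lam a w = lam b w :=
          yb_lemA lam rho injL E1 I1 (congrFun hq) rfl rfl
        exact Quotient.sound (funext h3)
      · intro qy
        induction qy using Quotient.ind with
        | _ yy =>
        obtain ⟨w, hw⟩ := surjL x yy
        exact ⟨Quotient.mk _ w, congrArg (Quotient.mk _) hw⟩
    · intro qy
      induction qy using Quotient.ind with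
      | _ y =>
      constructor
      · intro qa qb
        induction qa using Quotient.ind with
        | _ a =>
        induction qb using Quotient.ind with
        | _ b =>
        intro h
        have hq : lam (rho y a) = lam (rho y b) := Quotient.exact h
        have h2 := bridgeL (congrFun hq)
        have h3 : ∀ w, rho a w = rho b w :=
          yb_lemA rho lam injR hE1' hI1' h2 rfl rfl
        exact Quotient.sound (funext (bridgeR h3))
      · intro qx
        induction qx using Quotient.ind with
        | _ x =>
        obtain ⟨w, hw⟩ := surjR y x
        exact ⟨Quotient.mk _ w, congrArg (Quotient.mk _) hw⟩
  case _ =>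
    intro hsf qx
    induction qx using Quotient.ind with
    | _ x =>
    constructor
    · exact congrArg _ (hsf x).1
    · exact congrArg _ (hsf x).2
  case _ =>
    intro hlri qx qy
    induction qx using Quotient.ind with
    | _ x =>
    induction qy using Quotient.ind with
    | _ y =>
    constructor
    · exact congrArg _ (hlri x y).1
    · exact congrArg _ (hlri x y).2
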